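/- arXiv:1910.01964 — 3 statements merged into one kernel-verified Lean document; each statement's English description precedes it below -/
import Mathlib

section
/- For a strictly positive random variable T with E[T⁻¹|X=x], E[T⁻²|X=x], E[T|X=x] finite and E[T⁻²|X=x] > 0, one has E[T⁻¹|X=x] / E[T⁻²|X=x] ≤ E[T|X=x]. -/
open MeasureTheory

lemma aux_pt {a b : ℝ} (ha : 0 < a) (hb : 0 < b) :
    a⁻¹ + b⁻¹ ≤ a⁻¹ ^ 2 * b + b⁻¹ ^ 2 * a := by
  have h1 : a⁻¹ + b⁻¹ = (a + b) / (a * b) := by field_simp; ring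
  have h2 : a⁻¹ ^ 2 * b + b⁻¹ ^ 2 * a = (a ^ 3 + b ^ 3) / (a ^ 2 * b ^ 2) := by
    field_simp; ring
  rw [h1, h2, div_le_div_iff₀ (by positivity) (by positivity)]
  nlinarith [mul_nonneg (mul_nonneg (add_pos ha hb).le (sq_nonneg (a - b)))
    (mul_pos ha hb).le]

/-- Park–Stefanski bound: for a strictly positive random variable `T` (under the
conditional law given `X = x`, modeled as a probability measure `μ`),
`E[T⁻¹] / E[T⁻²] ≤ E[T]`. -/
theorem stmt1 {Ω : Type*} [MeasurableSpace Ω] (μ : Measure Ω) [IsProbabilityMeasure μ]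
    (T : Ω → ℝ) (hTpos : ∀ᵐ ω ∂μ, 0 < T ω)
    (hT : Integrable T μ)
    (h1 : Integrable (fun ω => (T ω)⁻¹) μ)
    (h2 : Integrable (fun ω => (T ω)⁻¹ ^ 2) μ)
    (hpos : 0 < ∫ ω, (T ω)⁻¹ ^ 2 ∂μ) :
    (∫ ω, (T ω)⁻¹ ∂μ) / (∫ ω, (T ω)⁻¹ ^ 2 ∂μ) ≤ ∫ ω, T ω ∂μ := by
  rw [div_le_iff₀ hpos]
  -- key: ∫ T⁻¹ ≤ (∫ T) * (∫ T⁻²) ; via Chebyshev's correlation inequality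
  -- proved on the product measure.
  set P : Measure (Ω × Ω) := μ.prod μ with hP
  have hfstT : ∀ᵐ z ∂P, 0 < T z.1 := Measure.quasiMeasurePreserving_fst.ae hTpos
  have hsndT : ∀ᵐ z ∂P, 0 < T z.2 := Measure.quasiMeasurePreserving_snd.ae hTpos
  have iA : Integrable (fun z : Ω × Ω => (T z.1)⁻¹ ^ 2 * T z.2) P := h2.mul_prod hT
  have iB : Integrable (fun z : Ω × Ω => T z.1 * (T z.2)⁻¹ ^ 2) P := hT.mul_prod h2
  have iC : Integrable (fun z : Ω × Ω => (T z.1)⁻¹ * (1 : ℝ)) P :=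
    h1.mul_prod (integrable_const 1)
  have iD : Integrable (fun z : Ω × Ω => (1 : ℝ) * (T z.2)⁻¹) P :=
    (integrable_const 1).mul_prod h1
  have key : ∫ z, ((T z.1)⁻¹ * 1 + 1 * (T z.2)⁻¹) ∂P ≤
      ∫ z, ((T z.1)⁻¹ ^ 2 * T z.2 + T z.1 * (T z.2)⁻¹ ^ 2) ∂P := by
    refine integral_mono_ae (iC.add iD) (iA.add iB) ?_
    filter_upwards [hfstT, hsndT] with z h1z h2z
    have := aux_pt h1z h2z
    simp only [one_mul, mul_one]
    nlinarith [this]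
  rw [integral_add iC iD, integral_add iA iB] at key
  rw [hP] at key
  rw [integral_prod_mul (fun ω => (T ω)⁻¹) (fun _ => (1 : ℝ)),
      integral_prod_mul (fun _ => (1 : ℝ)) (fun ω => (T ω)⁻¹),
      integral_prod_mul (fun ω => (T ω)⁻¹ ^ 2) T,
      integral_prod_mul T (fun ω => (T ω)⁻¹ ^ 2)] at key
  simp only [integral_const, measure_univ, probReal_univ, ENNReal.toReal_one, smul_eq_mul, one_mul,
    mul_one] at key
  linarith
end

section
/- Let (Ω, F, P) be a probability space, G, H sub-σ-algebras, and U, V bounded random variables measurable with respect to G and H respectively, with |U| ≤ M₁ and |V| ≤ M₂ a.s. Then |Cov(U, V)| ≤ 4 M₁ M₂ α(G, H), where α(G, H) = sup{|P(A ∩ B) − P(A)P(B)| : A ∈ G, B ∈ H} is the strong mixing coefficient. -/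
open MeasureTheory

/-- The ±1-valued function associated to a set. -/
noncomputable def eps {Ω : Type*} (S : Set Ω) : Ω → ℝ :=
  fun ω => 2 * Set.indicator S (fun _ => (1:ℝ)) ω - 1

lemma eps_apply {Ω : Type*} (S : Set Ω) (ω : Ω) [Decidable (ω ∈ S)] :
    eps S ω = if ω ∈ S then 1 else -1 := by
  simp [eps, Set.indicator_apply]
  split <;> norm_num

lemma eps_abs_le {Ω : Type*} (S : Set Ω) (ω : Ω) : |eps S ω| ≤ 1 := by
  classical
  rw [eps_apply]
  split <;> norm_num

lemma eps_measurable {Ω : Type*} {m : MeasurableSpace Ω} {S : Set Ω}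
    (hS : MeasurableSet[m] S) : Measurable[m] (eps S) := by
  unfold eps
  exact (((measurable_const.indicator hS)).const_mul 2).sub measurable_const

/-- One step of the sign trick: the covariance of `U` with `V` is controlled by
`M` times the covariance of a ±1-valued `G`-measurable function with `V`. -/
lemma step {Ω : Type*} [m0 : MeasurableSpace Ω] (μ : Measure Ω) [IsProbabilityMeasure μ]
    {G : MeasurableSpace Ω} (hG : G ≤ m0)
    {U V : Ω → ℝ} (hUm : Measurable[G] U) (hVm : Measurable[m0] V)
    {M C : ℝ} (hM : 0 ≤ M) (hU : ∀ᵐ ω ∂μ, |U ω| ≤ M) (hVb : ∀ᵐ ω ∂μ, |V ω| ≤ C) :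
    ∃ S : Set Ω, MeasurableSet[G] S ∧
      |∫ ω, U ω * V ω ∂μ - (∫ ω, U ω ∂μ) * ∫ ω, V ω ∂μ| ≤
        M * |∫ ω, eps S ω * V ω ∂μ - (∫ ω, eps S ω ∂μ) * ∫ ω, V ω ∂μ| := by
  classical
  have hUmm : Measurable[m0] U := hUm.mono hG le_rfl
  have hVint : Integrable V μ := by
    have : Integrable (fun ω => V ω * (1:ℝ)) μ :=
      (integrable_const (1:ℝ)).bdd_mul hVm.aestronglyMeasurable
        (by filter_upwards [hVb] with ω h using by simpa [Real.norm_eq_abs] using h)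
    simpa using this
  have hUint : Integrable U μ := by
    have : Integrable (fun ω => U ω * (1:ℝ)) μ :=
      (integrable_const (1:ℝ)).bdd_mul hUmm.aestronglyMeasurable
        (by filter_upwards [hU] with ω h using by simpa [Real.norm_eq_abs] using h)
    simpa using this
  have hUVint : Integrable (fun ω => U ω * V ω) μ :=
    hVint.bdd_mul hUmm.aestronglyMeasurable
      (by filter_upwards [hU] with ω h using by simpa [Real.norm_eq_abs] using h)
  set g : Ω → ℝ := μ[V | G] with hg_def
  have hgm : StronglyMeasurable[G] g := stronglyMeasurable_condExp
  have hgint : Integrable g μ := integrable_condExp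
  set c : ℝ := ∫ ω, V ω ∂μ with hc_def
  have hUgint : Integrable (fun ω => U ω * g ω) μ :=
    hgint.bdd_mul hUmm.aestronglyMeasurable
      (by filter_upwards [hU] with ω h using by simpa [Real.norm_eq_abs] using h)
  -- pull-out property for U
  have hpull : ∫ ω, U ω * V ω ∂μ = ∫ ω, U ω * g ω ∂μ := by
    have h1 : μ[(fun ω => U ω * V ω) | G] =ᵐ[μ] fun ω => U ω * g ω := by
      have := condExp_mul_of_stronglyMeasurable_left (μ := μ) hUm.stronglyMeasurable
        hUVint hVint
      exact this
    rw [← integral_condExp (μ := μ) hG (f := fun ω => U ω * V ω), integral_congr_ae h1]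
  -- covariance as ∫ U (g - c)
  have hcov : ∫ ω, U ω * V ω ∂μ - (∫ ω, U ω ∂μ) * c = ∫ ω, U ω * (g ω - c) ∂μ := by
    have : ∫ ω, U ω * (g ω - c) ∂μ
        = ∫ ω, U ω * g ω ∂μ - ∫ ω, U ω * c ∂μ := by
      rw [← integral_sub hUgint (hUint.mul_const c)]
      congr 1; ext ω; ring
    rw [this, integral_mul_const, hpull]
  -- first bound
  have habs : |∫ ω, U ω * V ω ∂μ - (∫ ω, U ω ∂μ) * c| ≤ M * ∫ ω, |g ω - c| ∂μ := by
    rw [hcov]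
    have hUgc : Integrable (fun ω => U ω * (g ω - c)) μ :=
      Integrable.bdd_mul (hgint.sub (integrable_const c)) hUmm.aestronglyMeasurable
        (by filter_upwards [hU] with ω h using by simpa [Real.norm_eq_abs] using h)
    calc |∫ ω, U ω * (g ω - c) ∂μ| ≤ ∫ ω, |U ω * (g ω - c)| ∂μ := by
          simpa only [Real.norm_eq_abs] using
            norm_integral_le_integral_norm (μ := μ) (f := fun ω => U ω * (g ω - c))
      _ ≤ ∫ ω, M * |g ω - c| ∂μ := by
          refine integral_mono_ae hUgc.abs
            ((hgint.sub (integrable_const c)).abs.const_mul M) ?_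
          filter_upwards [hU] with ω h
          rw [abs_mul]
          exact mul_le_mul_of_nonneg_right h (abs_nonneg _)
      _ = M * ∫ ω, |g ω - c| ∂μ := integral_const_mul M _
  -- the sign set
  set S : Set Ω := {ω | c ≤ g ω} with hS_def
  have hSG : MeasurableSet[G] S := measurableSet_le measurable_const hgm.measurable
  have hepsm : Measurable[G] (eps S) := eps_measurable hSG
  have hepsmm : Measurable[m0] (eps S) := hepsm.mono hG le_rfl
  have hepsbd : ∀ᵐ ω ∂μ, ‖eps S ω‖ ≤ 1 :=
    Filter.Eventually.of_forall fun ω => by simpa [Real.norm_eq_abs] using eps_abs_le S ω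
  have hptwise : ∀ ω, eps S ω * (g ω - c) = |g ω - c| := by
    intro ω
    rw [eps_apply]
    by_cases h : ω ∈ S
    · have hc : c ≤ g ω := h
      simp only [h, if_true, one_mul]
      exact (abs_of_nonneg (sub_nonneg.mpr hc)).symm
    · have hc : ¬ c ≤ g ω := h
      simp only [h, if_false]
      have : g ω - c < 0 := sub_neg.mpr (lt_of_not_ge hc)
      rw [abs_of_neg this]; ring
  have hepsVint : Integrable (fun ω => eps S ω * V ω) μ :=
    hVint.bdd_mul hepsmm.aestronglyMeasurable hepsbd
  have hepsgint : Integrable (fun ω => eps S ω * g ω) μ :=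
    hgint.bdd_mul hepsmm.aestronglyMeasurable hepsbd
  have hepsint : Integrable (eps S) μ := by
    have : Integrable (fun ω => eps S ω * (1:ℝ)) μ :=
      (integrable_const (1:ℝ)).bdd_mul hepsmm.aestronglyMeasurable hepsbd
    simpa using this
  -- pull-out for eps S
  have hpull2 : ∫ ω, eps S ω * V ω ∂μ = ∫ ω, eps S ω * g ω ∂μ := by
    have h1 : μ[(fun ω => eps S ω * V ω) | G] =ᵐ[μ] fun ω => eps S ω * g ω := by
      have := condExp_mul_of_stronglyMeasurable_left (μ := μ) hepsm.stronglyMeasurable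
        hepsVint hVint
      exact this
    rw [← integral_condExp (μ := μ) hG (f := fun ω => eps S ω * V ω), integral_congr_ae h1]
  have hkey : ∫ ω, |g ω - c| ∂μ
      = ∫ ω, eps S ω * V ω ∂μ - (∫ ω, eps S ω ∂μ) * c := by
    have h1 : ∫ ω, |g ω - c| ∂μ = ∫ ω, eps S ω * (g ω - c) ∂μ := by
      exact integral_congr_ae (Filter.Eventually.of_forall fun ω => (hptwise ω).symm)
    have h2 : ∫ ω, eps S ω * (g ω - c) ∂μ
        = ∫ ω, eps S ω * g ω ∂μ - ∫ ω, eps S ω * c ∂μ := by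
      rw [← integral_sub hepsgint (hepsint.mul_const c)]
      congr 1; ext ω; ring
    rw [h1, h2, integral_mul_const, hpull2]
  refine ⟨S, hSG, ?_⟩
  calc |∫ ω, U ω * V ω ∂μ - (∫ ω, U ω ∂μ) * ∫ ω, V ω ∂μ|
      ≤ M * ∫ ω, |g ω - c| ∂μ := habs
    _ = M * (∫ ω, eps S ω * V ω ∂μ - (∫ ω, eps S ω ∂μ) * c) := by rw [hkey]
    _ ≤ M * |∫ ω, eps S ω * V ω ∂μ - (∫ ω, eps S ω ∂μ) * ∫ ω, V ω ∂μ| :=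
        mul_le_mul_of_nonneg_left (le_abs_self _) hM

/-- Covariance of two ±1-valued functions is 4 times the set covariance. -/
lemma eps_cov {Ω : Type*} [m0 : MeasurableSpace Ω] (μ : Measure Ω) [IsProbabilityMeasure μ]
    {S T : Set Ω} (hS : MeasurableSet S) (hT : MeasurableSet T) :
    ∫ ω, eps T ω * eps S ω ∂μ - (∫ ω, eps T ω ∂μ) * ∫ ω, eps S ω ∂μ
      = 4 * ((μ (S ∩ T)).toReal - (μ S).toReal * (μ T).toReal) := by
  classical
  have iS : Integrable (S.indicator fun _ => (1:ℝ)) μ := (integrable_const (1:ℝ)).indicator hS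
  have iT : Integrable (T.indicator fun _ => (1:ℝ)) μ := (integrable_const (1:ℝ)).indicator hT
  have iST : Integrable ((S ∩ T).indicator fun _ => (1:ℝ)) μ :=
    (integrable_const (1:ℝ)).indicator (hS.inter hT)
  have intS : ∫ ω, S.indicator (fun _ => (1:ℝ)) ω ∂μ = (μ S).toReal := by
    rw [integral_indicator_const (1:ℝ) hS]; simp [Measure.real]
  have intT : ∫ ω, T.indicator (fun _ => (1:ℝ)) ω ∂μ = (μ T).toReal := by
    rw [integral_indicator_const (1:ℝ) hT]; simp [Measure.real]
  have intST : ∫ ω, (S ∩ T).indicator (fun _ => (1:ℝ)) ω ∂μ = (μ (S ∩ T)).toReal := by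
    rw [integral_indicator_const (1:ℝ) (hS.inter hT)]; simp [Measure.real]
  have hprod : ∀ ω, eps T ω * eps S ω
      = 4 * (S ∩ T).indicator (fun _ => (1:ℝ)) ω
        - 2 * S.indicator (fun _ => (1:ℝ)) ω - 2 * T.indicator (fun _ => (1:ℝ)) ω + 1 := by
    intro ω
    by_cases hs : ω ∈ S <;> by_cases ht : ω ∈ T <;>
      simp [eps, Set.indicator_apply, hs, ht] <;> ring
  have hepsS : ∫ ω, eps S ω ∂μ = 2 * (μ S).toReal - 1 := by
    unfold eps
    rw [integral_sub (iS.const_mul 2) (integrable_const 1), integral_const_mul, intS]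
    simp
  have hepsT : ∫ ω, eps T ω ∂μ = 2 * (μ T).toReal - 1 := by
    unfold eps
    rw [integral_sub (iT.const_mul 2) (integrable_const 1), integral_const_mul, intT]
    simp
  have hepsTS : ∫ ω, eps T ω * eps S ω ∂μ
      = 4 * (μ (S ∩ T)).toReal - 2 * (μ S).toReal - 2 * (μ T).toReal + 1 := by
    rw [integral_congr_ae (Filter.Eventually.of_forall hprod)]
    have i1 : Integrable (fun ω => 4 * (S ∩ T).indicator (fun _ => (1:ℝ)) ω
        - 2 * S.indicator (fun _ => (1:ℝ)) ω - 2 * T.indicator (fun _ => (1:ℝ)) ω) μ :=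
      ((iST.const_mul 4).sub (iS.const_mul 2)).sub (iT.const_mul 2)
    have i2 : Integrable (fun ω => 4 * (S ∩ T).indicator (fun _ => (1:ℝ)) ω
        - 2 * S.indicator (fun _ => (1:ℝ)) ω) μ := (iST.const_mul 4).sub (iS.const_mul 2)
    rw [integral_add i1 (integrable_const 1),
      integral_sub i2 (iT.const_mul 2),
      integral_sub (iST.const_mul 4) (iS.const_mul 2),
      integral_const_mul, integral_const_mul, integral_const_mul, intS, intT, intST]
    simp
  rw [hepsTS, hepsS, hepsT]; ring

/-- Covariance inequality for strong mixing (Davydov/Rio for bounded variables):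
if `U`, `V` are bounded and measurable w.r.t. sub-σ-algebras `G`, `H`, then
`|Cov(U,V)| ≤ 4 M₁ M₂ α(G,H)`, where `α` is (an upper bound for) the strong mixing
coefficient `sup{|P(A∩B) − P(A)P(B)| : A ∈ G, B ∈ H}`. -/
theorem stmt5 {Ω : Type*} [m0 : MeasurableSpace Ω] (μ : Measure Ω) [IsProbabilityMeasure μ]
    (G H : MeasurableSpace Ω) (hG : G ≤ m0) (hH : H ≤ m0)
    (U V : Ω → ℝ) (hUm : Measurable[G] U) (hVm : Measurable[H] V)
    (M₁ M₂ : ℝ) (hM₁ : 0 ≤ M₁) (hM₂ : 0 ≤ M₂)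
    (hU : ∀ᵐ ω ∂μ, |U ω| ≤ M₁) (hV : ∀ᵐ ω ∂μ, |V ω| ≤ M₂)
    (α : ℝ)
    (hα : ∀ A B : Set Ω, MeasurableSet[G] A → MeasurableSet[H] B →
      |(μ (A ∩ B)).toReal - (μ A).toReal * (μ B).toReal| ≤ α) :
    |∫ ω, U ω * V ω ∂μ - (∫ ω, U ω ∂μ) * ∫ ω, V ω ∂μ| ≤ 4 * M₁ * M₂ * α := by
  obtain ⟨S, hS, h1⟩ := step (m0 := m0) μ hG hUm (Measurable.mono hVm hH le_rfl) hM₁ hU hV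
  have hepsSb : ∀ᵐ ω ∂μ, |eps S ω| ≤ 1 := Filter.Eventually.of_forall (eps_abs_le S)
  have hswap : ∫ ω, eps S ω * V ω ∂μ = ∫ ω, V ω * eps S ω ∂μ := by
    exact integral_congr_ae (Filter.Eventually.of_forall fun ω => mul_comm _ _)
  obtain ⟨T, hT, h2⟩ := step (m0 := m0) μ hH hVm ((eps_measurable hS).mono hG le_rfl) hM₂ hV hepsSb
  have hcovST : ∫ ω, eps T ω * eps S ω ∂μ - (∫ ω, eps T ω ∂μ) * ∫ ω, eps S ω ∂μ
      = 4 * ((μ (S ∩ T)).toReal - (μ S).toReal * (μ T).toReal) :=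
    eps_cov (m0 := m0) μ (hG _ hS) (hH _ hT)
  have hfin : |∫ ω, eps T ω * eps S ω ∂μ - (∫ ω, eps T ω ∂μ) * ∫ ω, eps S ω ∂μ| ≤ 4 * α := by
    rw [hcovST, abs_mul]
    have := hα S T hS hT
    calc |(4:ℝ)| * |(μ (S ∩ T)).toReal - (μ S).toReal * (μ T).toReal| ≤ |(4:ℝ)| * α := by
          exact mul_le_mul_of_nonneg_left this (abs_nonneg _)
      _ = 4 * α := by norm_num
  calc |∫ ω, U ω * V ω ∂μ - (∫ ω, U ω ∂μ) * ∫ ω, V ω ∂μ|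
      ≤ M₁ * |∫ ω, eps S ω * V ω ∂μ - (∫ ω, eps S ω ∂μ) * ∫ ω, V ω ∂μ| := h1
    _ = M₁ * |∫ ω, V ω * eps S ω ∂μ - (∫ ω, V ω ∂μ) * ∫ ω, eps S ω ∂μ| := by
        rw [hswap, mul_comm (∫ ω, eps S ω ∂μ)]
    _ ≤ M₁ * (M₂ * |∫ ω, eps T ω * eps S ω ∂μ - (∫ ω, eps T ω ∂μ) * ∫ ω, eps S ω ∂μ|) :=
        mul_le_mul_of_nonneg_left h2 hM₁
    _ ≤ M₁ * (M₂ * (4 * α)) := by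
        exact mul_le_mul_of_nonneg_left (mul_le_mul_of_nonneg_left hfin hM₂) hM₁
    _ = 4 * M₁ * M₂ * α := by ring
end

section
/- Let {Tᵢ} and {Cᵢ} be sequences of random variables that are α-mixing with coefficients α₁(n) and α₂(n), and suppose the two sequences are independent of each other. Then the sequence Yᵢ = min(Tᵢ, Cᵢ) is α-mixing with coefficient α(n) ≤ 4 max(α₁(n), α₂(n)). -/
open MeasureTheory ProbabilityTheory
open scoped ENNReal

/-- σ-algebra generated by `Z₁, …, Z_k`. -/
def sigmaUpTo {Ω : Type*} (Z : ℕ → Ω → ℝ) (k : ℕ) : MeasurableSpace Ω :=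
  ⨆ i ∈ Set.Icc 1 k, MeasurableSpace.comap (Z i) inferInstance

/-- σ-algebra generated by `Z_k, Z_{k+1}, …`. -/
def sigmaFrom {Ω : Type*} (Z : ℕ → Ω → ℝ) (k : ℕ) : MeasurableSpace Ω :=
  ⨆ i ∈ Set.Ici k, MeasurableSpace.comap (Z i) inferInstance

namespace Stmt13Aux

variable {Ω : Type*}

lemma comap_diag_prod (F G : MeasurableSpace Ω) :
    MeasurableSpace.comap (fun ω => (ω, ω)) (F.prod G) = F ⊔ G := by
  have h1 : (Prod.fst ∘ fun ω : Ω => (ω, ω)) = id := rfl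
  have h2 : (Prod.snd ∘ fun ω : Ω => (ω, ω)) = id := rfl
  rw [MeasurableSpace.prod, MeasurableSpace.comap_sup, MeasurableSpace.comap_comp,
    MeasurableSpace.comap_comp, h1, h2, MeasurableSpace.comap_id, MeasurableSpace.comap_id]

lemma half {m : MeasurableSpace Ω} (μ : Measure Ω) [IsProbabilityMeasure μ]
    {f g : Ω → ℝ≥0∞} {b : ℝ} (hb : 0 ≤ b)
    (hf1 : ∀ ω, f ω ≤ 1) (hg1 : ∀ ω, g ω ≤ 1)
    (h : ∀ ω, (f ω).toReal ≤ (g ω).toReal + b) :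
    (∫⁻ ω, f ω ∂μ).toReal ≤ (∫⁻ ω, g ω ∂μ).toReal + b := by
  have hgfin : ∫⁻ ω, g ω ∂μ ≤ 1 := by
    calc ∫⁻ ω, g ω ∂μ ≤ ∫⁻ _, 1 ∂μ := lintegral_mono hg1
    _ = 1 := by simp
  have hle : ∫⁻ ω, f ω ∂μ ≤ ENNReal.ofReal b + ∫⁻ ω, g ω ∂μ := by
    have : ∫⁻ ω, f ω ∂μ ≤ ∫⁻ ω, ENNReal.ofReal b + g ω ∂μ := by
      refine lintegral_mono fun ω => ?_
      have hfne : f ω ≠ ⊤ := ((hf1 ω).trans_lt ENNReal.one_lt_top).ne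
      have hgne : g ω ≠ ⊤ := ((hg1 ω).trans_lt ENNReal.one_lt_top).ne
      calc f ω = ENNReal.ofReal (f ω).toReal := (ENNReal.ofReal_toReal hfne).symm
      _ ≤ ENNReal.ofReal ((g ω).toReal + b) := ENNReal.ofReal_le_ofReal (h ω)
      _ = ENNReal.ofReal (g ω).toReal + ENNReal.ofReal b :=
          ENNReal.ofReal_add ENNReal.toReal_nonneg hb
      _ = ENNReal.ofReal b + g ω := by rw [ENNReal.ofReal_toReal hgne, add_comm]
    rwa [lintegral_add_left measurable_const, lintegral_const, measure_univ, mul_one] at this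
  have hrhs_ne : ENNReal.ofReal b + ∫⁻ ω, g ω ∂μ ≠ ⊤ :=
    ENNReal.add_ne_top.mpr ⟨ENNReal.ofReal_ne_top, (hgfin.trans_lt ENNReal.one_lt_top).ne⟩
  calc (∫⁻ ω, f ω ∂μ).toReal ≤ (ENNReal.ofReal b + ∫⁻ ω, g ω ∂μ).toReal :=
        ENNReal.toReal_mono hrhs_ne hle
  _ = b + (∫⁻ ω, g ω ∂μ).toReal := by
      rw [ENNReal.toReal_add ENNReal.ofReal_ne_top ((hgfin.trans_lt ENNReal.one_lt_top).ne),
        ENNReal.toReal_ofReal hb]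
  _ = (∫⁻ ω, g ω ∂μ).toReal + b := add_comm _ _

lemma abs_toReal_lintegral_sub_le {m : MeasurableSpace Ω} (μ : Measure Ω)
    [IsProbabilityMeasure μ] {f g : Ω → ℝ≥0∞} {b : ℝ} (hb : 0 ≤ b)
    (hf1 : ∀ ω, f ω ≤ 1) (hg1 : ∀ ω, g ω ≤ 1)
    (h : ∀ ω, |(f ω).toReal - (g ω).toReal| ≤ b) :
    |(∫⁻ ω, f ω ∂μ).toReal - (∫⁻ ω, g ω ∂μ).toReal| ≤ b := by
  rw [abs_sub_le_iff]
  constructor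
  · have := half μ hb hf1 hg1 (fun ω => by
      have := (abs_sub_le_iff.mp (h ω)).1; linarith)
    linarith
  · have := half μ hb hg1 hf1 (fun ω => by
      have := (abs_sub_le_iff.mp (h ω)).2; linarith)
    linarith

end Stmt13Aux

namespace Stmt13Aux

lemma cov_bound {Ω : Type*} (F G : MeasurableSpace Ω) {m0 : MeasurableSpace Ω}
    (μ : Measure Ω) [IsProbabilityMeasure μ]
    (hF : F ≤ m0) (hG : G ≤ m0)
    (X Y : Ω → ℝ≥0∞) (hX : Measurable[F] X) (hY : Measurable[G] Y)
    (hX1 : ∀ ω, X ω ≤ 1) (hY1 : ∀ ω, Y ω ≤ 1) {b : ℝ}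
    (hmix : ∀ A B : Set Ω, MeasurableSet[F] A → MeasurableSet[G] B →
      |(μ (A ∩ B)).toReal - (μ A).toReal * (μ B).toReal| ≤ b) :
    |(∫⁻ ω, X ω * Y ω ∂μ).toReal -
      (∫⁻ ω, X ω ∂μ).toReal * (∫⁻ ω, Y ω ∂μ).toReal| ≤ b := by
  have hb : 0 ≤ b := by
    simpa using hmix ∅ ∅ (@MeasurableSet.empty Ω F) (@MeasurableSet.empty Ω G)
  set lam : Measure ℝ := volume.restrict (Set.Ioo (0:ℝ) 1) with hlam
  haveI : IsProbabilityMeasure lam :=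
    ⟨by rw [Measure.restrict_apply_univ]; simp [Real.volume_Ioo]⟩
  set Λ : Measure (ℝ × ℝ) := lam.prod lam with hΛ
  haveI : IsProbabilityMeasure Λ := by rw [hΛ]; infer_instance
  -- measurability of toReal compositions
  have hXF : Measurable[F] fun ω => (X ω).toReal := hX.ennreal_toReal
  have hYG : Measurable[G] fun ω => (Y ω).toReal := hY.ennreal_toReal
  have hXm : Measurable fun ω => (X ω).toReal := (hX.mono hF le_rfl).ennreal_toReal
  have hYm : Measurable fun ω => (Y ω).toReal := (hY.mono hG le_rfl).ennreal_toReal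
  set A : ℝ → Set Ω := fun s => {ω | s < (X ω).toReal} with hA
  set B : ℝ → Set Ω := fun t => {ω | t < (Y ω).toReal} with hB
  have hAF : ∀ s, MeasurableSet[F] (A s) := fun s =>
    measurableSet_lt measurable_const hXF
  have hBG : ∀ t, MeasurableSet[G] (B t) := fun t =>
    measurableSet_lt measurable_const hYG
  have hAm : ∀ s, MeasurableSet (A s) := fun s => hF _ (hAF s)
  have hBm : ∀ t, MeasurableSet (B t) := fun t => hG _ (hBG t)
  -- layer cake
  have layer : ∀ (Z : Ω → ℝ≥0∞), (∀ ω, Z ω ≤ 1) → ∀ ω,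
      lam (Set.Iio (Z ω).toReal) = Z ω := by
    intro Z hZ1 ω
    have hne : Z ω ≠ ⊤ := ((hZ1 ω).trans_lt ENNReal.one_lt_top).ne
    have hr1 : (Z ω).toReal ≤ 1 := by
      simpa using ENNReal.toReal_mono ENNReal.one_ne_top (hZ1 ω)
    have hset : Set.Iio (Z ω).toReal ∩ Set.Ioo 0 1 = Set.Ioo 0 (Z ω).toReal := by
      ext s
      simp only [Set.mem_inter_iff, Set.mem_Iio, Set.mem_Ioo]
      constructor
      · rintro ⟨h1, h2, _⟩; exact ⟨h2, h1⟩
      · rintro ⟨h1, h2⟩; exact ⟨h2, h1, lt_of_lt_of_le h2 hr1⟩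
    rw [hlam, Measure.restrict_apply measurableSet_Iio, hset, Real.volume_Ioo,
      sub_zero, ENNReal.ofReal_toReal hne]
  -- single-variable representation
  have single : ∀ (Z : Ω → ℝ≥0∞), Measurable (fun ω => (Z ω).toReal) → (∀ ω, Z ω ≤ 1) →
      ∫⁻ ω, Z ω ∂μ = ∫⁻ s, μ {ω | s < (Z ω).toReal} ∂lam := by
    intro Z hZm hZ1
    have hE : MeasurableSet {q : Ω × ℝ | q.2 < (Z q.1).toReal} :=
      measurableSet_lt measurable_snd (hZm.comp measurable_fst)
    have hswap := lintegral_lintegral_swap (μ := μ) (ν := lam)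
      (f := fun ω s => ({q : Ω × ℝ | q.2 < (Z q.1).toReal}).indicator 1 (ω, s))
      (by exact (measurable_one.indicator hE).aemeasurable)
    calc ∫⁻ ω, Z ω ∂μ
        = ∫⁻ ω, ∫⁻ s, ({q : Ω × ℝ | q.2 < (Z q.1).toReal}).indicator 1 (ω, s) ∂lam ∂μ := by
          refine lintegral_congr fun ω => ?_
          have hind : ∀ s : ℝ, ({q : Ω × ℝ | q.2 < (Z q.1).toReal}).indicator
              (1 : Ω × ℝ → ℝ≥0∞) (ω, s)
              = (Set.Iio (Z ω).toReal).indicator (1 : ℝ → ℝ≥0∞) s := by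
            intro s
            by_cases h : s < (Z ω).toReal <;>
              simp [Set.indicator_apply, Set.mem_setOf_eq, Set.mem_Iio, h]
          rw [lintegral_congr hind, lintegral_indicator_one measurableSet_Iio,
            layer Z hZ1 ω]
    _ = ∫⁻ s, ∫⁻ ω, ({q : Ω × ℝ | q.2 < (Z q.1).toReal}).indicator 1 (ω, s) ∂μ ∂lam := hswap
    _ = ∫⁻ s, μ {ω | s < (Z ω).toReal} ∂lam := by
          refine lintegral_congr fun s => ?_
          have hind : ∀ ω : Ω, ({q : Ω × ℝ | q.2 < (Z q.1).toReal}).indicator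
              (1 : Ω × ℝ → ℝ≥0∞) (ω, s)
              = ({ω : Ω | s < (Z ω).toReal}).indicator (1 : Ω → ℝ≥0∞) ω := by
            intro ω
            by_cases h : s < (Z ω).toReal <;>
              simp [Set.indicator_apply, Set.mem_setOf_eq, h]
          rw [lintegral_congr hind,
            lintegral_indicator_one (measurableSet_lt measurable_const hZm)]
  have hXrep : ∫⁻ ω, X ω ∂μ = ∫⁻ s, μ (A s) ∂lam := single X hXm hX1
  have hYrep : ∫⁻ ω, Y ω ∂μ = ∫⁻ t, μ (B t) ∂lam := single Y hYm hY1
  -- product representation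
  have hE1 : MeasurableSet {q : Ω × (ℝ × ℝ) | q.2.1 < (X q.1).toReal ∧ q.2.2 < (Y q.1).toReal} :=
    (measurableSet_lt (measurable_snd.fst) (hXm.comp measurable_fst)).inter
      (measurableSet_lt (measurable_snd.snd) (hYm.comp measurable_fst))
  have hswap1 := lintegral_lintegral_swap (μ := μ) (ν := Λ)
    (f := fun ω p => ({q : Ω × (ℝ × ℝ) |
        q.2.1 < (X q.1).toReal ∧ q.2.2 < (Y q.1).toReal}).indicator 1 (ω, p))
    (by exact (measurable_one.indicator hE1).aemeasurable)
  have hXYrep : ∫⁻ ω, X ω * Y ω ∂μ = ∫⁻ p, μ (A p.1 ∩ B p.2) ∂Λ := by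
    calc ∫⁻ ω, X ω * Y ω ∂μ
        = ∫⁻ ω, ∫⁻ p, ({q : Ω × (ℝ × ℝ) |
            q.2.1 < (X q.1).toReal ∧ q.2.2 < (Y q.1).toReal}).indicator 1 (ω, p) ∂Λ ∂μ := by
          refine lintegral_congr fun ω => ?_
          have hind : ∀ p : ℝ × ℝ,
              ({q : Ω × (ℝ × ℝ) | q.2.1 < (X q.1).toReal ∧ q.2.2 < (Y q.1).toReal}).indicator
                (1 : Ω × (ℝ × ℝ) → ℝ≥0∞) (ω, p)
              = ((Set.Iio (X ω).toReal) ×ˢ (Set.Iio (Y ω).toReal)).indicator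
                  (1 : ℝ × ℝ → ℝ≥0∞) p := by
            intro p
            by_cases h : p.1 < (X ω).toReal ∧ p.2 < (Y ω).toReal <;>
              simp [Set.indicator_apply, Set.mem_setOf_eq, Set.mem_prod, Set.mem_Iio, h]
          rw [lintegral_congr hind,
            lintegral_indicator_one (measurableSet_Iio.prod measurableSet_Iio),
            hΛ, Measure.prod_prod, layer X hX1 ω, layer Y hY1 ω]
    _ = ∫⁻ p, ∫⁻ ω, ({q : Ω × (ℝ × ℝ) |
          q.2.1 < (X q.1).toReal ∧ q.2.2 < (Y q.1).toReal}).indicator 1 (ω, p) ∂μ ∂Λ := hswap1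
    _ = ∫⁻ p, μ (A p.1 ∩ B p.2) ∂Λ := by
          refine lintegral_congr fun p => ?_
          have hind : ∀ ω : Ω,
              ({q : Ω × (ℝ × ℝ) | q.2.1 < (X q.1).toReal ∧ q.2.2 < (Y q.1).toReal}).indicator
                (1 : Ω × (ℝ × ℝ) → ℝ≥0∞) (ω, p)
              = (A p.1 ∩ B p.2).indicator (1 : Ω → ℝ≥0∞) ω := by
            intro ω
            by_cases h : p.1 < (X ω).toReal ∧ p.2 < (Y ω).toReal <;>
              simp [Set.indicator_apply, Set.mem_setOf_eq, Set.mem_inter_iff, hA, hB, h]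
          rw [lintegral_congr hind,
            lintegral_indicator_one ((hAm p.1).inter (hBm p.2))]
  -- product of integrals
  have hμA : Measurable fun s => μ (A s) := by
    have hE : MeasurableSet {q : ℝ × Ω | q.1 < (X q.2).toReal} :=
      measurableSet_lt measurable_fst (hXm.comp measurable_snd)
    rw [hA]
    exact measurable_measure_prodMk_left (ν := μ) hE
  have hμB : Measurable fun t => μ (B t) := by
    have hE : MeasurableSet {q : ℝ × Ω | q.1 < (Y q.2).toReal} :=
      measurableSet_lt measurable_fst (hYm.comp measurable_snd)
    rw [hB]
    exact measurable_measure_prodMk_left (ν := μ) hE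
  have hprodrep : (∫⁻ s, μ (A s) ∂lam) * (∫⁻ t, μ (B t) ∂lam)
      = ∫⁻ p, μ (A p.1) * μ (B p.2) ∂Λ :=
    (lintegral_prod_mul hμA.aemeasurable hμB.aemeasurable).symm
  rw [hXYrep, hXrep, hYrep, ← ENNReal.toReal_mul, hprodrep]
  refine abs_toReal_lintegral_sub_le Λ hb (fun p => prob_le_one)
    (fun p => mul_le_one' prob_le_one prob_le_one) (fun p => ?_)
  rw [ENNReal.toReal_mul]
  exact hmix (A p.1) (B p.2) (hAF p.1) (hBG p.2)

end Stmt13Aux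

namespace Stmt13Aux

lemma prod_mono {Ω : Type*} {F₁ F₂ G₁ G₂ : MeasurableSpace Ω}
    (h1 : F₁ ≤ F₂) (h2 : G₁ ≤ G₂) : F₁.prod G₁ ≤ F₂.prod G₂ :=
  sup_le_sup (MeasurableSpace.comap_mono h1) (MeasurableSpace.comap_mono h2)

lemma diag_measure {Ω : Type*} (MT MC : MeasurableSpace Ω) {m0 : MeasurableSpace Ω}
    (μ : Measure Ω) [IsProbabilityMeasure μ]
    (hMT : MT ≤ m0) (hMC : MC ≤ m0) (hindep : Indep MT MC μ)
    {S : Set (Ω × Ω)} (hS : MeasurableSet[MC.prod MT] S) :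
    μ ((fun ω => (ω, ω)) ⁻¹' S) = (@Measure.prod Ω Ω MC MT (μ.trim hMC) (μ.trim hMT)) S := by
  haveI hPC : IsProbabilityMeasure (μ.trim hMC) :=
    ⟨by rw [trim_measurableSet_eq hMC (@MeasurableSet.univ Ω MC)]; exact measure_univ⟩
  haveI hPT : IsProbabilityMeasure (μ.trim hMT) :=
    ⟨by rw [trim_measurableSet_eq hMT (@MeasurableSet.univ Ω MT)]; exact measure_univ⟩
  set P := @Measure.prod Ω Ω MC MT (μ.trim hMC) (μ.trim hMT) with hP
  haveI hPP : IsProbabilityMeasure P := by rw [hP]; infer_instance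
  have hdm : ∀ S' : Set (Ω × Ω), MeasurableSet[MC.prod MT] S' →
      MeasurableSet ((fun ω : Ω => (ω, ω)) ⁻¹' S') := by
    intro S' hS'
    have h1 : MeasurableSet[MeasurableSpace.comap (fun ω : Ω => (ω, ω)) (MC.prod MT)]
        ((fun ω : Ω => (ω, ω)) ⁻¹' S') := MeasurableSpace.measurableSet_comap.mpr ⟨S', hS', rfl⟩
    rw [comap_diag_prod] at h1
    exact (sup_le hMC hMT) _ h1
  refine MeasurableSpace.induction_on_inter (m := MC.prod MT)
    (C := fun S' _ => μ ((fun ω : Ω => (ω, ω)) ⁻¹' S') = P S')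
    (s := Set.image2 (· ×ˢ ·) {s : Set Ω | MeasurableSet[MC] s} {t : Set Ω | MeasurableSet[MT] t})
    ?_ ?_ ?_ ?_ ?_ ?_ _ hS
  · exact (@generateFrom_prod Ω Ω MC MT).symm
  · exact @isPiSystem_prod Ω Ω MC MT
  · simp
  · rintro S' ⟨s, hs, t, ht, rfl⟩
    have hpre : (fun ω : Ω => (ω, ω)) ⁻¹' (s ×ˢ t) = s ∩ t := by
      ext ω; simp [Set.mem_prod]
    have hpp : P (s ×ˢ t) = (μ.trim hMC) s * (μ.trim hMT) t := by
      rw [hP]; exact @Measure.prod_prod Ω Ω MC MT (μ.trim hMC) (μ.trim hMT) (by infer_instance) s t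
    rw [hpre, hpp, trim_measurableSet_eq hMC hs, trim_measurableSet_eq hMT ht]
    exact (Indep_iff MC MT μ).mp hindep.symm s t hs ht
  · intro S' hS' hC
    rw [Set.preimage_compl, measure_compl (hdm S' hS') (measure_ne_top μ _),
      measure_compl hS' (measure_ne_top _ _), hC, measure_univ, measure_univ]
  · intro f hdisj hmeas hC
    rw [Set.preimage_iUnion, measure_iUnion ?_ (fun i => hdm _ (hmeas i)),
      measure_iUnion hdisj hmeas]
    · exact tsum_congr hC
    · exact fun i j hij => Set.disjoint_iff_inter_eq_empty.mpr (by
        have := Set.disjoint_iff_inter_eq_empty.mp (hdisj hij)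
        rw [← Set.preimage_inter, this, Set.preimage_empty])

end Stmt13Aux

namespace Stmt13Aux

lemma abstract {Ω : Type*} (FT GT FC GC MT MC : MeasurableSpace Ω)
    {m0 : MeasurableSpace Ω} (μ : Measure Ω) [IsProbabilityMeasure μ]
    (hFT : FT ≤ MT) (hGT : GT ≤ MT) (hFC : FC ≤ MC) (hGC : GC ≤ MC)
    (hMT : MT ≤ m0) (hMC : MC ≤ m0) (hindep : Indep MT MC μ) {a b : ℝ}
    (hmixT : ∀ A B : Set Ω, MeasurableSet[FT] A → MeasurableSet[GT] B →
      |(μ (A ∩ B)).toReal - (μ A).toReal * (μ B).toReal| ≤ a)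
    (hmixC : ∀ A B : Set Ω, MeasurableSet[FC] A → MeasurableSet[GC] B →
      |(μ (A ∩ B)).toReal - (μ A).toReal * (μ B).toReal| ≤ b)
    {A B : Set Ω} (hA : MeasurableSet[FC ⊔ FT] A) (hB : MeasurableSet[GC ⊔ GT] B) :
    |(μ (A ∩ B)).toReal - (μ A).toReal * (μ B).toReal| ≤ a + b := by
  have ha : 0 ≤ a := by
    simpa using hmixT ∅ ∅ (@MeasurableSet.empty Ω FT) (@MeasurableSet.empty Ω GT)
  have hFTm : FT ≤ m0 := hFT.trans hMT
  have hGTm : GT ≤ m0 := hGT.trans hMT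
  have hFCm : FC ≤ m0 := hFC.trans hMC
  have hGCm : GC ≤ m0 := hGC.trans hMC
  -- represent A and B as preimages of product-measurable sets under the diagonal
  rw [← comap_diag_prod FC FT] at hA
  rw [← comap_diag_prod GC GT] at hB
  obtain ⟨Ap, hAp, hAeq⟩ := MeasurableSpace.measurableSet_comap.mp hA
  obtain ⟨Bp, hBp, hBeq⟩ := MeasurableSpace.measurableSet_comap.mp hB
  have hApM : MeasurableSet[MC.prod MT] Ap := prod_mono hFC hFT _ hAp
  have hBpM : MeasurableSet[MC.prod MT] Bp := prod_mono hGC hGT _ hBp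
  -- probability instances for trimmed measures
  haveI hPC : IsProbabilityMeasure (μ.trim hMC) :=
    ⟨by rw [trim_measurableSet_eq hMC (@MeasurableSet.univ Ω MC)]; exact measure_univ⟩
  haveI hPT : IsProbabilityMeasure (μ.trim hMT) :=
    ⟨by rw [trim_measurableSet_eq hMT (@MeasurableSet.univ Ω MT)]; exact measure_univ⟩
  haveI hPFT : IsProbabilityMeasure (μ.trim hFTm) :=
    ⟨by rw [trim_measurableSet_eq hFTm (@MeasurableSet.univ Ω FT)]; exact measure_univ⟩
  haveI hPGT : IsProbabilityMeasure (μ.trim hGTm) :=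
    ⟨by rw [trim_measurableSet_eq hGTm (@MeasurableSet.univ Ω GT)]; exact measure_univ⟩
  -- section measurability
  have hsecA : ∀ ω : Ω, MeasurableSet[FT] (Prod.mk ω ⁻¹' Ap) := fun ω =>
    (@measurable_prodMk_left Ω Ω FC FT ω) hAp
  have hsecB : ∀ ω : Ω, MeasurableSet[GT] (Prod.mk ω ⁻¹' Bp) := fun ω =>
    (@measurable_prodMk_left Ω Ω GC GT ω) hBp
  have hsecAB : ∀ ω : Ω, MeasurableSet[MT] ((Prod.mk ω ⁻¹' Ap) ∩ (Prod.mk ω ⁻¹' Bp)) := fun ω =>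
    (hFT _ (hsecA ω)).inter (hGT _ (hsecB ω))
  -- the X, Y functions
  set X : Ω → ℝ≥0∞ := fun ω => (μ.trim hFTm) (Prod.mk ω ⁻¹' Ap) with hX
  set Y : Ω → ℝ≥0∞ := fun ω => (μ.trim hGTm) (Prod.mk ω ⁻¹' Bp) with hY
  have hXmeas : Measurable[FC] X := by
    rw [hX]
    exact @measurable_measure_prodMk_left Ω Ω FC FT (μ.trim hFTm) (by infer_instance) Ap hAp
  have hYmeas : Measurable[GC] Y := by
    rw [hY]
    exact @measurable_measure_prodMk_left Ω Ω GC GT (μ.trim hGTm) (by infer_instance) Bp hBp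
  have hXv : ∀ ω, X ω = μ (Prod.mk ω ⁻¹' Ap) := fun ω => trim_measurableSet_eq hFTm (hsecA ω)
  have hYv : ∀ ω, Y ω = μ (Prod.mk ω ⁻¹' Bp) := fun ω => trim_measurableSet_eq hGTm (hsecB ω)
  have hX1 : ∀ ω, X ω ≤ 1 := fun ω => prob_le_one
  have hY1 : ∀ ω, Y ω ≤ 1 := fun ω => prob_le_one
  -- the W function
  set W : Ω → ℝ≥0∞ := fun ω => (μ.trim hMT) (Prod.mk ω ⁻¹' (Ap ∩ Bp)) with hW
  have hWmeas : Measurable[MC] W := by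
    rw [hW]
    exact @measurable_measure_prodMk_left Ω Ω MC MT (μ.trim hMT) (by infer_instance)
      (Ap ∩ Bp) (hApM.inter hBpM)
  have hWv : ∀ ω, W ω = μ ((Prod.mk ω ⁻¹' Ap) ∩ (Prod.mk ω ⁻¹' Bp)) := fun ω => by
    have h' : W ω = (μ.trim hMT) ((Prod.mk ω ⁻¹' Ap) ∩ (Prod.mk ω ⁻¹' Bp)) := rfl
    rw [h']
    exact trim_measurableSet_eq hMT (hsecAB ω)
  have hW1 : ∀ ω, W ω ≤ 1 := fun ω => prob_le_one
  -- identities for μ A, μ B, μ (A ∩ B)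
  have keyA : μ A = ∫⁻ ω, X ω ∂μ := by
    rw [← hAeq, diag_measure MT MC μ hMT hMC hindep hApM,
      @Measure.prod_apply Ω Ω MC MT (μ.trim hMC) (μ.trim hMT) (by infer_instance) Ap hApM,
      ← lintegral_trim hMC (hXmeas.mono hFC le_rfl)]
    refine lintegral_congr fun ω => ?_
    rw [hXv ω]
    exact trim_measurableSet_eq hMT (hFT _ (hsecA ω))
  have keyB : μ B = ∫⁻ ω, Y ω ∂μ := by
    rw [← hBeq, diag_measure MT MC μ hMT hMC hindep hBpM,
      @Measure.prod_apply Ω Ω MC MT (μ.trim hMC) (μ.trim hMT) (by infer_instance) Bp hBpM,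
      ← lintegral_trim hMC (hYmeas.mono hGC le_rfl)]
    refine lintegral_congr fun ω => ?_
    rw [hYv ω]
    exact trim_measurableSet_eq hMT (hGT _ (hsecB ω))
  have keyAB : μ (A ∩ B) = ∫⁻ ω, W ω ∂μ := by
    rw [← hAeq, ← hBeq, ← Set.preimage_inter,
      diag_measure MT MC μ hMT hMC hindep (hApM.inter hBpM),
      @Measure.prod_apply Ω Ω MC MT (μ.trim hMC) (μ.trim hMT) (by infer_instance)
        (Ap ∩ Bp) (hApM.inter hBpM),
      ← lintegral_trim hMC hWmeas]
  -- first mixing bound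
  have h1 : |(∫⁻ ω, W ω ∂μ).toReal - (∫⁻ ω, X ω * Y ω ∂μ).toReal| ≤ a := by
    refine abs_toReal_lintegral_sub_le μ ha hW1
      (fun ω => mul_le_one' (hX1 ω) (hY1 ω)) (fun ω => ?_)
    rw [hWv ω, ENNReal.toReal_mul, hXv ω, hYv ω]
    exact hmixT _ _ (hsecA ω) (hsecB ω)
  -- second mixing bound
  have h2 := cov_bound FC GC μ hFCm hGCm X Y hXmeas hYmeas hX1 hY1 hmixC
  rw [keyA, keyB, keyAB]
  calc |(∫⁻ ω, W ω ∂μ).toReal - (∫⁻ ω, X ω ∂μ).toReal * (∫⁻ ω, Y ω ∂μ).toReal|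
      ≤ |(∫⁻ ω, W ω ∂μ).toReal - (∫⁻ ω, X ω * Y ω ∂μ).toReal| +
        |(∫⁻ ω, X ω * Y ω ∂μ).toReal -
          (∫⁻ ω, X ω ∂μ).toReal * (∫⁻ ω, Y ω ∂μ).toReal| := abs_sub_le _ _ _
  _ ≤ a + b := add_le_add h1 h2

end Stmt13Aux

namespace Stmt13Aux

lemma sigmaUpTo_min_le {Ω : Type*} (T C : ℕ → Ω → ℝ) (k : ℕ) :
    sigmaUpTo (fun i ω => min (T i ω) (C i ω)) k ≤ sigmaUpTo C k ⊔ sigmaUpTo T k := by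
  refine iSup₂_le fun i hi => ?_
  have hT' : Measurable[sigmaUpTo C k ⊔ sigmaUpTo T k] (T i) :=
    measurable_iff_comap_le.mpr
      (le_trans (le_biSup (fun j => MeasurableSpace.comap (T j) inferInstance) hi) le_sup_right)
  have hC' : Measurable[sigmaUpTo C k ⊔ sigmaUpTo T k] (C i) :=
    measurable_iff_comap_le.mpr
      (le_trans (le_biSup (fun j => MeasurableSpace.comap (C j) inferInstance) hi) le_sup_left)
  exact measurable_iff_comap_le.mp (hT'.min hC')

lemma sigmaFrom_min_le {Ω : Type*} (T C : ℕ → Ω → ℝ) (k : ℕ) :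
    sigmaFrom (fun i ω => min (T i ω) (C i ω)) k ≤ sigmaFrom C k ⊔ sigmaFrom T k := by
  refine iSup₂_le fun i hi => ?_
  have hT' : Measurable[sigmaFrom C k ⊔ sigmaFrom T k] (T i) :=
    measurable_iff_comap_le.mpr
      (le_trans (le_biSup (fun j => MeasurableSpace.comap (T j) inferInstance) hi) le_sup_right)
  have hC' : Measurable[sigmaFrom C k ⊔ sigmaFrom T k] (C i) :=
    measurable_iff_comap_le.mpr
      (le_trans (le_biSup (fun j => MeasurableSpace.comap (C j) inferInstance) hi) le_sup_left)
  exact measurable_iff_comap_le.mp (hT'.min hC')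

end Stmt13Aux

/-- Cai (2001), Lemma 2: if `{Tᵢ}` and `{Cᵢ}` are α-mixing with coefficients `α₁(n)`,
`α₂(n)` and mutually independent, then `Yᵢ = min(Tᵢ, Cᵢ)` is α-mixing with coefficient
`α(n) ≤ 4 max(α₁(n), α₂(n))`. -/
theorem stmt13 {Ω : Type*} [m0 : MeasurableSpace Ω] (μ : Measure Ω) [IsProbabilityMeasure μ]
    (T C : ℕ → Ω → ℝ) (hT : ∀ i, Measurable (T i)) (hC : ∀ i, Measurable (C i))
    (hindep : Indep (⨆ i, MeasurableSpace.comap (T i) inferInstance)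
      (⨆ i, MeasurableSpace.comap (C i) inferInstance) μ)
    (α₁ α₂ : ℕ → ℝ)
    (hα₁ : ∀ (n k : ℕ) (A B : Set Ω), MeasurableSet[sigmaUpTo T k] A →
      MeasurableSet[sigmaFrom T (k + n)] B →
      |(μ (A ∩ B)).toReal - (μ A).toReal * (μ B).toReal| ≤ α₁ n)
    (hα₂ : ∀ (n k : ℕ) (A B : Set Ω), MeasurableSet[sigmaUpTo C k] A →
      MeasurableSet[sigmaFrom C (k + n)] B →
      |(μ (A ∩ B)).toReal - (μ A).toReal * (μ B).toReal| ≤ α₂ n) :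
    ∀ (n k : ℕ) (A B : Set Ω),
      MeasurableSet[sigmaUpTo (fun i ω => min (T i ω) (C i ω)) k] A →
      MeasurableSet[sigmaFrom (fun i ω => min (T i ω) (C i ω)) (k + n)] B →
      |(μ (A ∩ B)).toReal - (μ A).toReal * (μ B).toReal| ≤ 4 * max (α₁ n) (α₂ n) := by
  intro n k A B hA hB
  have hFT : sigmaUpTo T k ≤ ⨆ i, MeasurableSpace.comap (T i) inferInstance :=
    iSup₂_le fun i _ => le_iSup (fun j => MeasurableSpace.comap (T j) inferInstance) i
  have hGT : sigmaFrom T (k + n) ≤ ⨆ i, MeasurableSpace.comap (T i) inferInstance :=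
    iSup₂_le fun i _ => le_iSup (fun j => MeasurableSpace.comap (T j) inferInstance) i
  have hFC : sigmaUpTo C k ≤ ⨆ i, MeasurableSpace.comap (C i) inferInstance :=
    iSup₂_le fun i _ => le_iSup (fun j => MeasurableSpace.comap (C j) inferInstance) i
  have hGC : sigmaFrom C (k + n) ≤ ⨆ i, MeasurableSpace.comap (C i) inferInstance :=
    iSup₂_le fun i _ => le_iSup (fun j => MeasurableSpace.comap (C j) inferInstance) i
  have hMT : (⨆ i, MeasurableSpace.comap (T i) inferInstance) ≤ m0 :=
    iSup_le fun i => (hT i).comap_le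
  have hMC : (⨆ i, MeasurableSpace.comap (C i) inferInstance) ≤ m0 :=
    iSup_le fun i => (hC i).comap_le
  have hA' : MeasurableSet[sigmaUpTo C k ⊔ sigmaUpTo T k] A :=
    Stmt13Aux.sigmaUpTo_min_le T C k _ hA
  have hB' : MeasurableSet[sigmaFrom C (k + n) ⊔ sigmaFrom T (k + n)] B :=
    Stmt13Aux.sigmaFrom_min_le T C (k + n) _ hB
  have hmain := Stmt13Aux.abstract (sigmaUpTo T k) (sigmaFrom T (k + n))
    (sigmaUpTo C k) (sigmaFrom C (k + n)) _ _ μ hFT hGT hFC hGC hMT hMC hindep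
    (hα₁ n k) (hα₂ n k) hA' hB'
  have h10 : 0 ≤ α₁ n := by
    simpa using hα₁ n k ∅ ∅ (@MeasurableSet.empty Ω (sigmaUpTo T k))
      (@MeasurableSet.empty Ω (sigmaFrom T (k + n)))
  have h1 : α₁ n ≤ max (α₁ n) (α₂ n) := le_max_left _ _
  have h2 : α₂ n ≤ max (α₁ n) (α₂ n) := le_max_right _ _
  have h0 : 0 ≤ max (α₁ n) (α₂ n) := le_trans h10 h1
  linarith
end
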